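/- Let q: ℝ → ℍ be a differentiable quaternionic curve with q_v(t) ≠ 0 for all t. Then exp(−q(t))·(d/dt) exp(q(t)) = q̇(t) + [1 − sin(2|q_v|)/(2|q_v|)]·[⟨q_v/|q_v|, q̇_v⟩·(q_v/|q_v|) − q̇_v] − [(1 − cos(2|q_v|))/(2|q_v|)]·(q_v/|q_v|) × q̇_v, where all quantities are evaluated at t. -/

import Mathlib

open Quaternion NormedSpace

/-- Euclidean inner product of the vector (imaginary) parts, via the basis i, j, k. -/
noncomputable def qdot (a b : Quaternion ℝ) : ℝ :=
  a.imI * b.imI + a.imJ * b.imJ + a.imK * b.imK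

/-- Cross product of the vector (imaginary) parts, via the basis i, j, k. -/
noncomputable def qcross (a b : Quaternion ℝ) : Quaternion ℝ :=
  ⟨0, a.imJ * b.imK - a.imK * b.imJ, a.imK * b.imI - a.imI * b.imK,
    a.imI * b.imJ - a.imJ * b.imI⟩

noncomputable def imCLM : ℍ[ℝ] →L[ℝ] ℍ[ℝ] := LinearMap.toContinuousLinearMap
  { toFun := fun a => a.im
    map_add' := fun a b => by ext <;> simp
    map_smul' := fun r a => by ext <;> simp }

noncomputable def imICLM : ℍ[ℝ] →L[ℝ] ℝ := LinearMap.toContinuousLinearMap (QuaternionAlgebra.imIₗ _ _ _)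
noncomputable def imJCLM : ℍ[ℝ] →L[ℝ] ℝ := LinearMap.toContinuousLinearMap (QuaternionAlgebra.imJₗ _ _ _)
noncomputable def imKCLM : ℍ[ℝ] →L[ℝ] ℝ := LinearMap.toContinuousLinearMap (QuaternionAlgebra.imKₗ _ _ _)
noncomputable def reCLM : ℍ[ℝ] →L[ℝ] ℝ := LinearMap.toContinuousLinearMap (QuaternionAlgebra.reₗ _ _ _)

theorem qmk_smul_re (r a b c d : ℝ) : (@HSMul.hSMul ℝ ℍ[ℝ] ℍ[ℝ] _ r (QuaternionAlgebra.mk a b c d)).re = r * a := rfl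
theorem qmk_smul_imI (r a b c d : ℝ) : (@HSMul.hSMul ℝ ℍ[ℝ] ℍ[ℝ] _ r (QuaternionAlgebra.mk a b c d)).imI = r * b := rfl
theorem qmk_smul_imJ (r a b c d : ℝ) : (@HSMul.hSMul ℝ ℍ[ℝ] ℍ[ℝ] _ r (QuaternionAlgebra.mk a b c d)).imJ = r * c := rfl
theorem qmk_smul_imK (r a b c d : ℝ) : (@HSMul.hSMul ℝ ℍ[ℝ] ℍ[ℝ] _ r (QuaternionAlgebra.mk a b c d)).imK = r * d := rfl

theorem key (v d : ℍ[ℝ]) (θ c s : ℝ) (hvre : v.re = 0) (hθ : θ ≠ 0)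
    (h2 : v.imI^2 + v.imJ^2 + v.imK^2 = θ^2) (hcs : s^2 + c^2 = 1) :
    (c • (1:ℍ[ℝ]) + (s/θ) • (-v)) *
      (d.re • (c • (1:ℍ[ℝ]) + (s/θ) • v) +
        ((-s * (qdot v d.im / θ)) • (1:ℍ[ℝ]) +
          (((c * (qdot v d.im / θ) * θ - s * (qdot v d.im / θ)) / θ^2) • v
            + (s/θ) • d.im))) =
      d + (1 - (2*s*c) / (2*θ)) • (qdot (θ⁻¹ • v) d.im • (θ⁻¹ • v) - d.im)
        - ((1 - (2*c^2 - 1)) / (2*θ)) • qcross (θ⁻¹ • v) d.im := by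
  have hι : θ * θ⁻¹ = 1 := mul_inv_cancel₀ hθ
  set ι := θ⁻¹ with hι2
  simp only [qdot, qcross, div_eq_mul_inv, mul_inv, ← inv_pow]
  ext <;>
    simp [Quaternion.re_mul, Quaternion.imI_mul, Quaternion.imJ_mul, Quaternion.imK_mul,
      mul_inv, ← inv_pow, hvre, qmk_smul_re, qmk_smul_imI, qmk_smul_imJ, qmk_smul_imK]
  all_goals
    generalize v.imI = v1 at *
    generalize v.imJ = v2 at *
    generalize v.imK = v3 at *
    generalize d.re = w0 at *
    generalize d.imI = w1 at *
    generalize d.imJ = w2 at *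
    generalize d.imK = w3 at *
  · linear_combination (norm := ring1) (v1*w1*c*s*θ*ι^4 - v1*w1*s^2*ι^4 + v2*w2*c*s*θ*ι^4 - v2*w2*s^2*ι^4 + v3*w3*c*s*θ*ι^4 - v3*w3*s^2*ι^4 + w0*s^2*ι^2) * h2 + (w0) * hcs + (v1*w1*c*s*θ^2*ι^3 + v1*w1*c*s*θ*ι^2 + v1*w1*c*s*ι - v1*w1*s^2*θ*ι^3 - v1*w1*s^2*ι^2 + v2*w2*c*s*θ^2*ι^3 + v2*w2*c*s*θ*ι^2 + v2*w2*c*s*ι - v2*w2*s^2*θ*ι^3 - v2*w2*s^2*ι^2 + v3*w3*c*s*θ^2*ι^3 + v3*w3*c*s*θ*ι^2 + v3*w3*c*s*ι - v3*w3*s^2*θ*ι^3 - v3*w3*s^2*ι^2 + w0*s^2*θ*ι + w0*s^2) * hι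
  · linear_combination (norm := ring1) (w1*c^2*θ*ι^3 + w1*s^2*ι^2 - w1*ι^2) * h2 + (v1*v2*w2*θ*ι^3 + v1*v3*w3*θ*ι^3 - v2^2*w1*θ*ι^3 - v2*w3*ι^2 - v3^2*w1*θ*ι^3 + v3*w2*ι^2 + w1*θ^3*ι^3) * hcs + (-v1*v2*w2*s^2*ι^2 + v1*v2*w2*ι^2 - v1*v3*w3*s^2*ι^2 + v1*v3*w3*ι^2 + v2^2*w1*s^2*ι^2 - v2^2*w1*ι^2 + v3^2*w1*s^2*ι^2 - v3^2*w1*ι^2 - w1*s^2*θ^2*ι^2 + w1*θ^2*ι^2) * hι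
  · linear_combination (norm := ring1) (v1*v2*w1*θ*ι^3 + v1*w3*ι^2 + v2^2*w2*θ*ι^3 + v2*v3*w3*θ*ι^3 - v3*w1*ι^2) * hcs + (-v1*v2*w1*s^2*ι^2 + v1*v2*w1*ι^2 - v2^2*w2*s^2*ι^2 + v2^2*w2*ι^2 - v2*v3*w3*s^2*ι^2 + v2*v3*w3*ι^2) * hι
  · linear_combination (norm := ring1) (v1*v3*w1*θ*ι^3 - v1*w2*ι^2 + v2*v3*w2*θ*ι^3 + v2*w1*ι^2 + v3^2*w3*θ*ι^3) * hcs + (-v1*v3*w1*s^2*ι^2 + v1*v3*w1*ι^2 - v2*v3*w2*s^2*ι^2 + v2*v3*w2*ι^2 - v3^2*w3*s^2*ι^2 + v3^2*w3*ι^2) * hι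

theorem deriv_exp_quaternion_curve (q : ℝ → Quaternion ℝ)
    (hdiff : Differentiable ℝ q) (hv : ∀ t, (q t).im ≠ 0) (t : ℝ) :
    NormedSpace.exp (-(q t)) * deriv (fun s => NormedSpace.exp (q s)) t =
      deriv q t
        + (1 - Real.sin (2 * ‖(q t).im‖) / (2 * ‖(q t).im‖)) •
            (qdot (‖(q t).im‖⁻¹ • (q t).im) (deriv q t).im • (‖(q t).im‖⁻¹ • (q t).im)
              - (deriv q t).im)
        - ((1 - Real.cos (2 * ‖(q t).im‖)) / (2 * ‖(q t).im‖)) •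
            qcross (‖(q t).im‖⁻¹ • (q t).im) (deriv q t).im := by
  have hco : ∀ x : ℝ, (x : ℍ[ℝ]) = x • (1:ℍ[ℝ]) := fun x => by ext <;> simp
  have hd : HasDerivAt q (deriv q t) t := (hdiff t).hasDerivAt
  set d := deriv q t with hdd
  set v := (q t).im with hvv
  set θ := ‖(q t).im‖ with hθθ
  have hθ0 : θ ≠ 0 := norm_ne_zero_iff.mpr (hv t)
  have hre : HasDerivAt (fun s => (q s).re) d.re t := reCLM.hasFDerivAt.comp_hasDerivAt t hd
  have hI : HasDerivAt (fun s => (q s).imI) d.imI t := imICLM.hasFDerivAt.comp_hasDerivAt t hd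
  have hJ : HasDerivAt (fun s => (q s).imJ) d.imJ t := imJCLM.hasFDerivAt.comp_hasDerivAt t hd
  have hK : HasDerivAt (fun s => (q s).imK) d.imK t := imKCLM.hasFDerivAt.comp_hasDerivAt t hd
  have him : HasDerivAt (fun s => (q s).im) d.im t := imCLM.hasFDerivAt.comp_hasDerivAt t hd
  have hnormeq : ∀ x : ℍ[ℝ], ‖x.im‖ = Real.sqrt (x.imI^2 + x.imJ^2 + x.imK^2) := fun x => by
    rw [norm_eq_sqrt_real_inner, Quaternion.inner_self]; simp [Quaternion.normSq_def']
  have hNt : (q t).imI^2 + (q t).imJ^2 + (q t).imK^2 = θ^2 := by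
    have h := hnormeq (q t)
    rw [hθθ, h, Real.sq_sqrt (by positivity)]
  have hN0 : (q t).imI^2 + (q t).imJ^2 + (q t).imK^2 ≠ 0 := by
    rw [hNt]; positivity
  set p := qdot v d.im with hpp
  have hN : HasDerivAt (fun s => (q s).imI^2 + (q s).imJ^2 + (q s).imK^2) (2 * p) t := by
    have h := ((hI.pow 2).add (hJ.pow 2)).add (hK.pow 2)
    convert h using 1
    · rfl
    · rfl
    · rfl
    simp [hpp, qdot, hvv]
    ring
  have hsqrtNt : Real.sqrt ((q t).imI^2 + (q t).imJ^2 + (q t).imK^2) = θ := by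
    rw [hNt, Real.sqrt_sq (norm_nonneg _)]
  have hn : HasDerivAt (fun s => ‖(q s).im‖) (p / θ) t := by
    have h1 : (fun s => ‖(q s).im‖) = fun s => Real.sqrt ((q s).imI^2 + (q s).imJ^2 + (q s).imK^2) :=
      funext fun s => hnormeq (q s)
    rw [h1]
    have h := hN.sqrt hN0
    rw [hsqrtNt] at h
    convert h using 1
    field_simp
  set c := Real.cos θ with hcc
  set s := Real.sin θ with hss
  have hcos : HasDerivAt (fun u => Real.cos ‖(q u).im‖ • (1:ℍ[ℝ])) ((-s * (p/θ)) • (1:ℍ[ℝ])) t :=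
    hn.cos.smul_const (1:ℍ[ℝ])
  have hsin : HasDerivAt (fun u => Real.sin ‖(q u).im‖ / ‖(q u).im‖)
      ((c * (p/θ) * θ - s * (p/θ)) / θ^2) t := hn.sin.div hn hθ0
  set B' : ℍ[ℝ] := (-s * (p/θ)) • (1:ℍ[ℝ]) + (((c * (p/θ) * θ - s * (p/θ)) / θ^2) • v + (s/θ) • d.im) with hBB'
  have hB : HasDerivAt (fun u => Real.cos ‖(q u).im‖ • (1:ℍ[ℝ]) + (Real.sin ‖(q u).im‖ / ‖(q u).im‖) • (q u).im)
      B' t := by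
    have h2 := hsin.smul him
    have h3 := hcos.add h2
    convert h3 using 2
    · rfl
    · rfl
    · rfl
    exact add_comm _ _
  have hA : HasDerivAt (fun u => Real.exp ((q u).re)) (Real.exp ((q t).re) * d.re) t := hre.exp
  set B : ℍ[ℝ] := c • (1:ℍ[ℝ]) + (s/θ) • v with hBB
  have hF : HasDerivAt (fun u => Real.exp ((q u).re) • (Real.cos ‖(q u).im‖ • (1:ℍ[ℝ]) + (Real.sin ‖(q u).im‖ / ‖(q u).im‖) • (q u).im))
      (Real.exp ((q t).re) • B' + (Real.exp ((q t).re) * d.re) • B) t := hA.smul hB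
  have hfun : (fun u => NormedSpace.exp (q u)) =
      fun u => Real.exp ((q u).re) • (Real.cos ‖(q u).im‖ • (1:ℍ[ℝ]) + (Real.sin ‖(q u).im‖ / ‖(q u).im‖) • (q u).im) := by
    funext u
    rw [Quaternion.exp_eq, ← Real.exp_eq_exp_ℝ, hco]
  have hderiv : deriv (fun u => NormedSpace.exp (q u)) t
      = Real.exp ((q t).re) • B' + (Real.exp ((q t).re) * d.re) • B := by
    rw [hfun]; exact hF.deriv
  have hexpneg : NormedSpace.exp (-(q t)) =
      Real.exp (-(q t).re) • (c • (1:ℍ[ℝ]) + (s/θ) • (-v)) := by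
    rw [Quaternion.exp_eq, ← Real.exp_eq_exp_ℝ, hco]
    simp only [Quaternion.re_neg, Quaternion.im_neg, norm_neg]
    rfl
  have haux : ∀ (a : ℝ) (X Y Z : ℍ[ℝ]) (r : ℝ), a ≠ 0 →
      (a⁻¹ • X) * (a • Y + (a * r) • Z) = X * (r • Z + Y) := by
    intro a X Y Z r ha
    rw [mul_add, smul_mul_smul_comm, smul_mul_smul_comm, inv_mul_cancel₀ ha, one_smul,
      mul_add, mul_smul_comm]
    rw [show a⁻¹ * (a * r) = r by field_simp]
    exact add_comm _ _
  rw [hderiv, hexpneg, Real.exp_neg, haux _ _ _ _ _ (Real.exp_ne_zero _)]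
  have h2θ : Real.sin (2 * θ) = 2 * s * c := by rw [Real.sin_two_mul]
  have h2θc : Real.cos (2 * θ) = 2 * c^2 - 1 := by rw [Real.cos_two_mul]
  rw [h2θ, h2θc]
  exact key v d θ c s (Quaternion.re_im _) hθ0
    (by simpa [hvv] using hNt) (Real.sin_sq_add_cos_sq θ)
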